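/- Let J = S \ {s_{i-2}, s_{i-1}, s_i} and let u, v ∈ (S_n)^J. For h = 1, 2, 3 and 1 ≤ j ≤ n define b_{h,j}(u,v) = |{r ∈ u^{-1}([i-3+h]) : r < j}| − |{r ∈ v^{-1}([i-3+h]) : r < j}|. Then u ≤ v in the Bruhat order if and only if b_{h,j}(u,v) ≥ 0 for all h ∈ {1,2,3} and all 1 ≤ j ≤ n. -/

import Mathlib

open Finset Polynomial

/-- The inversion number (Coxeter length) of a permutation of `ℕ`, counted on `{1, …, n}`. -/
def invNum (n : ℕ) (u : Equiv.Perm ℕ) : ℕ :=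
  (((Finset.Icc 1 n) ×ˢ (Finset.Icc 1 n)).filter
    (fun p => p.1 < p.2 ∧ u p.2 < u p.1)).card

/-- `u` is a member of `S_n`: it fixes every point outside `{1, …, n}`. -/
def IsPermOn (n : ℕ) (u : Equiv.Perm ℕ) : Prop :=
  ∀ m, m ∉ Finset.Icc 1 n → u m = m

/-- The adjacent transposition `s_i`, interchanging `i` and `i + 1`. -/
def sAdj (i : ℕ) : Equiv.Perm ℕ := Equiv.swap i (i + 1)

/-- The Bruhat order on `S_n`: `u ≤ v` iff `v` is obtained from `u` by successively
multiplying on the right by transpositions, increasing the length at each step. -/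
def BruhatLE (n : ℕ) (u v : Equiv.Perm ℕ) : Prop :=
  Relation.ReflTransGen
    (fun a b => invNum n a < invNum n b ∧
      ∃ i j, 1 ≤ i ∧ i < j ∧ j ≤ n ∧ b = a * Equiv.swap i j) u v

/-- `(S_n)^J`, the minimal coset representatives, where `J = S \ {s_e : e ∈ E}`. -/
def MinReps (n : ℕ) (E : Set ℕ) (u : Equiv.Perm ℕ) : Prop :=
  ∀ j, 1 ≤ j → j ≤ n - 1 → j ∉ E → invNum n u < invNum n (sAdj j * u)

/-- `|{r ∈ u⁻¹([m]) : r < j}|`, the number of positions `r < j` of `u` holding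
an element of `{1, …, m}`. -/
def posLT (n m j : ℕ) (u : Equiv.Perm ℕ) : ℕ :=
  ((Finset.Icc 1 n).filter (fun r => r < j ∧ u r ∈ Finset.Icc 1 m)).card

/-- Deodhar's recursion with `x = q` for the parabolic `R`-polynomials of `S_n`,
for `J = S \ {s_e : e ∈ E}`. -/
def IsRFamilyQ (n : ℕ) (E : Set ℕ)
    (R : Equiv.Perm ℕ → Equiv.Perm ℕ → Polynomial ℤ) : Prop :=
  (∀ u v, MinReps n E u → MinReps n E v → ¬ BruhatLE n u v → R u v = 0) ∧
  (∀ u, MinReps n E u → R u u = 1) ∧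
  (∀ u v, MinReps n E u → MinReps n E v → BruhatLE n u v → u ≠ v →
    ∀ j, 1 ≤ j → j ≤ n - 1 → v (j + 1) < v j →
      ((u (j + 1) < u j → R u v = R (u * sAdj j) (v * sAdj j)) ∧
       (¬ u (j + 1) < u j → MinReps n E (u * sAdj j) →
          R u v = X * R (u * sAdj j) (v * sAdj j) + (X - 1) * R u (v * sAdj j)) ∧
       (¬ u (j + 1) < u j → ¬ MinReps n E (u * sAdj j) →
          R u v = - R u (v * sAdj j))))


theorem Equiv.Perm.apply_inv_self {α : Type*} (f : Equiv.Perm α) (x : α) : f (f⁻¹ x) = x :=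
  Equiv.apply_symm_apply f x

theorem Equiv.Perm.inv_apply_self {α : Type*} (f : Equiv.Perm α) (x : α) : f⁻¹ (f x) = x :=
  Equiv.symm_apply_apply f x

namespace BruhatAux

variable {n : ℕ} {u v : Equiv.Perm ℕ}

lemma apply_mem (hu : IsPermOn n u) {x : ℕ} (hx : x ∈ Finset.Icc 1 n) :
    u x ∈ Finset.Icc 1 n := by
  by_contra h
  have h1 : u (u x) = u x := hu _ h
  have h2 : u x = x := u.injective h1
  rw [h2] at h
  exact h hx

lemma symm_apply_mem (hu : IsPermOn n u) {x : ℕ} (hx : x ∈ Finset.Icc 1 n) :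
    u⁻¹ x ∈ Finset.Icc 1 n := by
  by_contra h
  have h1 : u (u⁻¹ x) = u⁻¹ x := hu _ h
  rw [Equiv.Perm.apply_inv_self] at h1
  rw [← h1] at h
  exact h hx

lemma isPermOn_inv (hu : IsPermOn n u) : IsPermOn n u⁻¹ := by
  intro m hm
  have := hu m hm
  conv_lhs => rw [← this]
  exact Equiv.Perm.inv_apply_self u m

lemma isPermOn_mul_swap (hu : IsPermOn n u) {a b : ℕ} (ha : a ∈ Finset.Icc 1 n)
    (hb : b ∈ Finset.Icc 1 n) : IsPermOn n (u * Equiv.swap a b) := by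
  intro m hm
  have hma : m ≠ a := fun h => hm (h ▸ ha)
  have hmb : m ≠ b := fun h => hm (h ▸ hb)
  rw [Equiv.Perm.mul_apply, Equiv.swap_apply_of_ne_of_ne hma hmb]
  exact hu m hm

lemma isPermOn_swap_mul (hu : IsPermOn n u) {a b : ℕ} (ha : a ∈ Finset.Icc 1 n)
    (hb : b ∈ Finset.Icc 1 n) : IsPermOn n (Equiv.swap a b * u) := by
  intro m hm
  rw [Equiv.Perm.mul_apply, hu m hm]
  have hma : m ≠ a := fun h => hm (h ▸ ha)
  have hmb : m ≠ b := fun h => hm (h ▸ hb)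
  exact Equiv.swap_apply_of_ne_of_ne hma hmb

/-- Key inversion-count lemma. -/
lemma invNum_lt_swap {a b : ℕ} (ha : a ∈ Finset.Icc 1 n) (hb : b ∈ Finset.Icc 1 n)
    (hab : a < b) (hval : u a < u b) :
    invNum n u < invNum n (u * Equiv.swap a b) := by
  classical
  set s := Equiv.swap a b with hs
  have hsmem : ∀ x, x ∈ Finset.Icc 1 n → s x ∈ Finset.Icc 1 n := by
    intro x hx
    rcases eq_or_ne x a with rfl | hxa
    · rwa [hs, Equiv.swap_apply_left]
    rcases eq_or_ne x b with rfl | hxb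
    · rwa [hs, Equiv.swap_apply_right]
    · rwa [hs, Equiv.swap_apply_of_ne_of_ne hxa hxb]
  set Iu := (((Finset.Icc 1 n) ×ˢ (Finset.Icc 1 n)).filter
    (fun p => p.1 < p.2 ∧ u p.2 < u p.1)) with hIu
  set Iv := (((Finset.Icc 1 n) ×ˢ (Finset.Icc 1 n)).filter
    (fun p => p.1 < p.2 ∧ (u * s) p.2 < (u * s) p.1)) with hIv
  set φ : ℕ × ℕ → ℕ × ℕ := fun p => if s p.1 < s p.2 then (s p.1, s p.2) else p with hφ
  have hmem_Iu : ∀ p : ℕ × ℕ, p ∈ Iu ↔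
      (p.1 ∈ Finset.Icc 1 n ∧ p.2 ∈ Finset.Icc 1 n) ∧ p.1 < p.2 ∧ u p.2 < u p.1 := by
    intro p; rw [hIu, Finset.mem_filter, Finset.mem_product]
  have hmem_Iv : ∀ p : ℕ × ℕ, p ∈ Iv ↔
      (p.1 ∈ Finset.Icc 1 n ∧ p.2 ∈ Finset.Icc 1 n) ∧ p.1 < p.2 ∧ u (s p.2) < u (s p.1) := by
    intro p; rw [hIv, Finset.mem_filter, Finset.mem_product]
    simp [Equiv.Perm.mul_apply]
  have hss : ∀ x, s (s x) = x := fun x => Equiv.swap_apply_self a b x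
  have hsa : s a = b := Equiv.swap_apply_left a b
  have hsb : s b = a := Equiv.swap_apply_right a b
  have hmaps : ∀ p ∈ Iu, φ p ∈ Iv.erase (a, b) := by
    intro p hp
    obtain ⟨⟨hx, hy⟩, hxy, huv⟩ := (hmem_Iu p).mp hp
    obtain ⟨x, y⟩ := p
    simp only at hx hy hxy huv
    by_cases hc : s x < s y
    · have hφp : φ (x, y) = (s x, s y) := by simp [hφ, hc]
      rw [hφp, Finset.mem_erase]
      constructor
      · intro heq
        have h1 : s x = a := congrArg Prod.fst heq
        have h2 : s y = b := congrArg Prod.snd heq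
        have hx' : x = b := by rw [← hss x, h1, hsa]
        have hy' : y = a := by rw [← hss y, h2, hsb]
        omega
      · rw [hmem_Iv]
        refine ⟨⟨hsmem x hx, hsmem y hy⟩, hc, ?_⟩
        simpa [hss] using huv
    · have hφp : φ (x, y) = (x, y) := by simp [hφ, hc]
      have hxy' : x ≠ y := Nat.ne_of_lt hxy
      have hsne : s x ≠ s y := fun h => hxy' (s.injective h)
      have hsy : s y < s x := by omega
      rw [hφp, Finset.mem_erase]
      by_cases hxa : x = a
      · by_cases hyb : y = b
        · exfalso; rw [hxa, hyb] at huv; omega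
        · have hya : y ≠ a := by omega
          have hsyy : s y = y := Equiv.swap_apply_of_ne_of_ne hya hyb
          constructor
          · intro heq
            exact hyb (congrArg Prod.snd heq)
          · rw [hmem_Iv]
            refine ⟨⟨hx, hy⟩, hxy, ?_⟩
            rw [hsyy, hxa, hsa]
            rw [hxa] at huv
            exact lt_trans huv hval
      · by_cases hxb : x = b
        · have hya : y ≠ a := by omega
          have hyb : y ≠ b := by omega
          have hsyy : s y = y := Equiv.swap_apply_of_ne_of_ne hya hyb
          rw [hsyy, hxb, hsb] at hsy
          omega
        · have hsxx : s x = x := Equiv.swap_apply_of_ne_of_ne hxa hxb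
          by_cases hya : y = a
          · rw [hsxx, hya, hsa] at hsy
            omega
          · by_cases hyb : y = b
            · constructor
              · intro heq; exact hxa (congrArg Prod.fst heq)
              · rw [hmem_Iv]
                refine ⟨⟨hx, hy⟩, hxy, ?_⟩
                rw [hsxx, hyb, hsb]
                rw [hyb] at huv
                exact lt_trans hval huv
            · have hsyy : s y = y := Equiv.swap_apply_of_ne_of_ne hya hyb
              rw [hsxx, hsyy] at hsy
              omega
  have hinvol : ∀ p ∈ Iu, φ (φ p) = p := by
    intro p hp
    obtain ⟨⟨hx, hy⟩, hxy, huv⟩ := (hmem_Iu p).mp hp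
    obtain ⟨x, y⟩ := p
    simp only at hxy
    by_cases hc : s x < s y
    · have hφp : φ (x, y) = (s x, s y) := by simp [hφ, hc]
      rw [hφp]
      have : φ (s x, s y) = (s (s x), s (s y)) := by
        simp only [hφ]
        rw [if_pos]
        rw [hss, hss]
        exact hxy
      rw [this, hss, hss]
    · have hφp : φ (x, y) = (x, y) := by simp [hφ, hc]
      rw [hφp, hφp]
  have hinj : Set.InjOn φ Iu := by
    intro p hp q hq h
    have := hinvol p hp
    rw [h, hinvol q hq] at this
    exact this.symm
  have habIv : (a, b) ∈ Iv := by
    rw [hmem_Iv]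
    exact ⟨⟨ha, hb⟩, hab, by rw [hsa, hsb]; exact hval⟩
  have h1 : Iu.card ≤ (Iv.erase (a, b)).card :=
    Finset.card_le_card_of_injOn φ hmaps hinj
  have h2 : (Iv.erase (a, b)).card = Iv.card - 1 := Finset.card_erase_of_mem habIv
  have h3 : 0 < Iv.card := Finset.card_pos.mpr ⟨_, habIv⟩
  show Iu.card < Iv.card
  omega

lemma apply_lt_of_invNum_lt {a b : ℕ} (ha : a ∈ Finset.Icc 1 n) (hb : b ∈ Finset.Icc 1 n)
    (hab : a < b) (h : invNum n u < invNum n (u * Equiv.swap a b)) : u a < u b := by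
  rcases lt_trichotomy (u a) (u b) with h' | h' | h'
  · exact h'
  · exact absurd (u.injective h') (Nat.ne_of_lt hab)
  · exfalso
    have hval : (u * Equiv.swap a b) a < (u * Equiv.swap a b) b := by
      simpa [Equiv.Perm.mul_apply, Equiv.swap_apply_left, Equiv.swap_apply_right] using h'
    have := invNum_lt_swap (u := u * Equiv.swap a b) ha hb hab hval
    rw [mul_assoc, Equiv.swap_mul_self, mul_one] at this
    omega

lemma invNum_inv (hu : IsPermOn n u) : invNum n u⁻¹ = invNum n u := by
  unfold invNum
  apply Finset.card_nbij' (i := fun p => (u⁻¹ p.2, u⁻¹ p.1)) (j := fun p => (u p.2, u p.1))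
  · intro p hp
    rw [Finset.mem_coe, Finset.mem_filter, Finset.mem_product] at hp ⊢
    obtain ⟨⟨h1, h2⟩, h3, h4⟩ := hp
    refine ⟨⟨symm_apply_mem hu h2, symm_apply_mem hu h1⟩, h4, ?_⟩
    simpa [Equiv.Perm.apply_inv_self] using h3
  · intro p hp
    rw [Finset.mem_coe, Finset.mem_filter, Finset.mem_product] at hp ⊢
    obtain ⟨⟨h1, h2⟩, h3, h4⟩ := hp
    refine ⟨⟨apply_mem hu h2, apply_mem hu h1⟩, h4, ?_⟩
    simpa [Equiv.Perm.inv_apply_self] using h3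
  · intro p _; simp [Equiv.Perm.apply_inv_self]
  · intro p _; simp [Equiv.Perm.inv_apply_self]

lemma symm_lt_of_sAdj {j : ℕ} (hu : IsPermOn n u) (hj1 : 1 ≤ j) (hj2 : j + 1 ≤ n)
    (h : invNum n u < invNum n (sAdj j * u)) : u⁻¹ j < u⁻¹ (j + 1) := by
  have hjB : j ∈ Finset.Icc 1 n := Finset.mem_Icc.mpr ⟨hj1, by omega⟩
  have hj1B : j + 1 ∈ Finset.Icc 1 n := Finset.mem_Icc.mpr ⟨by omega, hj2⟩
  have hsu : IsPermOn n (sAdj j * u) := isPermOn_swap_mul hu hjB hj1B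
  have e1 : invNum n (sAdj j * u) = invNum n (u⁻¹ * Equiv.swap j (j + 1)) := by
    have e : (sAdj j * u)⁻¹ = u⁻¹ * Equiv.swap j (j + 1) := by
      simp [sAdj, mul_inv_rev, Equiv.swap_inv]
    rw [← invNum_inv hsu, e]
  have e2 : invNum n u = invNum n u⁻¹ := (invNum_inv hu).symm
  exact apply_lt_of_invNum_lt hjB hj1B (by omega) (by rw [← e1, ← e2]; exact h)

lemma posLT_sum (w : Equiv.Perm ℕ) (m j : ℕ) :
    posLT n m j w = ∑ r ∈ Finset.Icc 1 n, if r < j ∧ w r ∈ Finset.Icc 1 m then 1 else 0 :=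
  Finset.card_filter _ _

lemma posLT_j0 (w : Equiv.Perm ℕ) (m : ℕ) : posLT n m 0 w = 0 := by
  rw [posLT_sum]
  apply Finset.sum_eq_zero
  intro r _
  simp

lemma posLT_m0 (w : Equiv.Perm ℕ) (j : ℕ) : posLT n 0 j w = 0 := by
  rw [posLT_sum]
  apply Finset.sum_eq_zero
  intro r _
  simp only [Finset.mem_Icc]
  split_ifs with h
  · omega
  · rfl

lemma posLT_mono_m (w : Equiv.Perm ℕ) {m m' : ℕ} (h : m ≤ m') (j : ℕ) :
    posLT n m j w ≤ posLT n m' j w := by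
  rw [posLT_sum, posLT_sum]
  apply Finset.sum_le_sum
  intro r _
  simp only [Finset.mem_Icc]
  split_ifs <;> omega

lemma posLT_split_at (w : Equiv.Perm ℕ) (m : ℕ) {a j : ℕ} (ha : a ∈ Finset.Icc 1 n)
    (haj : a < j) :
    posLT n m j w = posLT n m a w + (if w a ∈ Finset.Icc 1 m then 1 else 0)
      + ((Finset.Icc 1 n).filter
          (fun r => a < r ∧ r < j ∧ w r ∈ Finset.Icc 1 m)).card := by
  have hmid : (if w a ∈ Finset.Icc 1 m then 1 else 0)
      = ∑ r ∈ Finset.Icc 1 n, if r = a ∧ w r ∈ Finset.Icc 1 m then 1 else 0 := by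
    rw [Finset.sum_eq_single a]
    · simp
    · intro b _ hne; simp [hne]
    · intro h; exact absurd ha h
  have key : ∀ r ∈ Finset.Icc 1 n, (if r < j ∧ w r ∈ Finset.Icc 1 m then (1 : ℕ) else 0)
      = (if r < a ∧ w r ∈ Finset.Icc 1 m then 1 else 0)
        + (if r = a ∧ w r ∈ Finset.Icc 1 m then 1 else 0)
        + (if a < r ∧ r < j ∧ w r ∈ Finset.Icc 1 m then 1 else 0) := by
    intro r _
    simp only [Finset.mem_Icc]
    split_ifs <;> omega
  rw [posLT_sum, Finset.sum_congr rfl key, Finset.sum_add_distrib, Finset.sum_add_distrib,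
    posLT_sum, Finset.card_filter, hmid]

lemma posLT_succ (w : Equiv.Perm ℕ) (m : ℕ) {j : ℕ} (hj : j ∈ Finset.Icc 1 n) :
    posLT n m (j + 1) w = posLT n m j w + (if w j ∈ Finset.Icc 1 m then 1 else 0) := by
  have h := posLT_split_at (n := n) w m hj (show j < j + 1 by omega)
  have hempty : ((Finset.Icc 1 n).filter
      (fun r => j < r ∧ r < j + 1 ∧ w r ∈ Finset.Icc 1 m)).card = 0 := by
    rw [Finset.card_eq_zero, Finset.filter_eq_empty_iff]
    intro r _
    omega
  omega

lemma posLT_split_val (w : Equiv.Perm ℕ) (j : ℕ) {l m : ℕ} (hlm : l ≤ m) :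
    posLT n m j w = posLT n l j w + ((Finset.Icc 1 n).filter
      (fun r => r < j ∧ w r ∈ Finset.Icc (l + 1) m)).card := by
  rw [posLT_sum, posLT_sum, Finset.card_filter, ← Finset.sum_add_distrib]
  apply Finset.sum_congr rfl
  intro r _
  simp only [Finset.mem_Icc]
  split_ifs <;> omega

lemma posLT_prefix_eq (h : ∀ r, r < j0 → u r = v r) (m : ℕ) {j : ℕ} (hj : j ≤ j0) :
    posLT n m j u = posLT n m j v := by
  rw [posLT_sum, posLT_sum]
  apply Finset.sum_congr rfl
  intro r _
  by_cases hrj : r < j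
  · rw [h r (by omega)]
  · simp [hrj]

lemma posLT_top (hu : IsPermOn n u) (j : ℕ) :
    posLT n n j u = ((Finset.Icc 1 n).filter (fun r => r < j)).card := by
  rw [posLT_sum, Finset.card_filter]
  apply Finset.sum_congr rfl
  intro r hr
  have := apply_mem hu hr
  simp only [Finset.mem_Icc] at this ⊢
  split_ifs <;> omega

lemma posLT_ge_n (hu : IsPermOn n u) {m : ℕ} (h : n ≤ m) (j : ℕ) :
    posLT n m j u = posLT n n j u := by
  rw [posLT_sum, posLT_sum]
  apply Finset.sum_congr rfl
  intro r hr
  have := apply_mem hu hr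
  simp only [Finset.mem_Icc] at this ⊢
  split_ifs <;> omega

lemma posLT_large_eq (hu : IsPermOn n u) (hv : IsPermOn n v) {j : ℕ} (hj : n < j) (m : ℕ) :
    posLT n m j u = posLT n m j v := by
  have key : ∀ w : Equiv.Perm ℕ, IsPermOn n w →
      posLT n m j w = ((Finset.Icc 1 n).filter (fun c => c ∈ Finset.Icc 1 m)).card := by
    intro w hw
    unfold posLT
    apply Finset.card_nbij' (i := fun r => w r) (j := fun c => w⁻¹ c)
    · intro r hr
      rw [Finset.mem_coe, Finset.mem_filter] at hr ⊢
      exact ⟨apply_mem hw hr.1, hr.2.2⟩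
    · intro c hc
      rw [Finset.mem_coe, Finset.mem_filter] at hc ⊢
      refine ⟨symm_apply_mem hw hc.1, ?_, ?_⟩
      · have := Finset.mem_Icc.mp (symm_apply_mem hw hc.1)
        show w⁻¹ c < j
        omega
      · rw [Equiv.Perm.apply_inv_self]
        exact hc.2
    · intro r _; exact Equiv.Perm.inv_apply_self w r
    · intro c _; exact Equiv.Perm.apply_inv_self w c
  rw [key u hu, key v hv]

lemma card_filter_val_le (w : Equiv.Perm ℕ) (l m j : ℕ) :
    ((Finset.Icc 1 n).filter (fun r => r < j ∧ w r ∈ Finset.Icc (l + 1) m)).card ≤ m - l := by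
  have h1 : ((Finset.Icc 1 n).filter
      (fun r => r < j ∧ w r ∈ Finset.Icc (l + 1) m)).card ≤ (Finset.Icc (l + 1) m).card := by
    apply Finset.card_le_card_of_injOn (fun r => w r)
    · intro r hr
      exact (Finset.mem_filter.mp hr).2.2
    · intro r _ r' _ h
      exact w.injective h
  rw [Nat.card_Icc] at h1
  omega

lemma posLT_eq_min (hu : IsPermOn n u) {l L : ℕ} (hLn : L ≤ n)
    (hmono : ∀ c1 c2, l + 1 ≤ c1 → c1 < c2 → c2 ≤ L → u⁻¹ c1 < u⁻¹ c2)
    {m : ℕ} (hlm : l ≤ m) (hmL : m ≤ L) (j : ℕ) :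
    posLT n m j u = min (posLT n l j u + (m - l)) (posLT n L j u) := by
  have h1 : posLT n m j u ≤ posLT n l j u + (m - l) := by
    rw [posLT_split_val u j hlm]
    exact Nat.add_le_add_left (card_filter_val_le u l m j) _
  have h2 : posLT n m j u ≤ posLT n L j u := posLT_mono_m u hmL j
  refine le_antisymm (le_min h1 h2) ?_
  by_contra hlt
  rw [not_le, lt_min_iff] at hlt
  obtain ⟨hA, hB⟩ := hlt
  -- from hA : small count of middle values, get a value c1 in (l, m] with position ≥ j
  have hsplit := posLT_split_val (n := n) u j hlm
  have hWlt : ((Finset.Icc 1 n).filter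
      (fun r => r < j ∧ u r ∈ Finset.Icc (l + 1) m)).card < m - l := by omega
  have hc1 : ∃ c1, c1 ∈ Finset.Icc (l + 1) m ∧ ¬ (u⁻¹ c1 < j) := by
    by_contra hall
    push_neg at hall
    have hinj : (Finset.Icc (l + 1) m).card ≤ ((Finset.Icc 1 n).filter
        (fun r => r < j ∧ u r ∈ Finset.Icc (l + 1) m)).card := by
      apply Finset.card_le_card_of_injOn (fun c => u⁻¹ c)
      · intro c hc
        have hcB : c ∈ Finset.Icc 1 n := by
          have := Finset.mem_Icc.mp hc
          exact Finset.mem_Icc.mpr ⟨by omega, by omega⟩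
        rw [Finset.mem_coe, Finset.mem_filter]
        refine ⟨symm_apply_mem hu hcB, hall c hc, ?_⟩
        rw [Equiv.Perm.apply_inv_self]
        exact hc
      · intro c _ c' _ h
        exact (Equiv.injective u⁻¹) h
    rw [Nat.card_Icc] at hinj
    omega
  obtain ⟨c1, hc1m, hc1j⟩ := hc1
  -- from hB : get a position r < j with u r ∈ (m, L]
  have hsplit2 := posLT_split_val (n := n) u j hmL
  have hW2 : 0 < ((Finset.Icc 1 n).filter
      (fun r => r < j ∧ u r ∈ Finset.Icc (m + 1) L)).card := by omega
  obtain ⟨r, hr⟩ := Finset.card_pos.mp hW2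
  rw [Finset.mem_filter] at hr
  obtain ⟨hrB, hrj, hrv⟩ := hr
  have hc1m' := Finset.mem_Icc.mp hc1m
  have hrv' := Finset.mem_Icc.mp hrv
  have := hmono c1 (u r) (by omega) (by omega) (by omega)
  rw [Equiv.Perm.inv_apply_self] at this
  omega

lemma chain_mono {f : ℕ → ℕ} {A B : ℕ} (h : ∀ k, A ≤ k → k + 1 ≤ B → f k < f (k + 1)) :
    ∀ c1 c2, A ≤ c1 → c1 < c2 → c2 ≤ B → f c1 < f c2 := by
  intro c1 c2 h1 h2 h3
  induction c2 with
  | zero => omega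
  | succ c2 ih =>
    rcases Nat.lt_or_ge c1 c2 with hc | hc
    · exact lt_trans (ih hc (by omega)) (h c2 (by omega) h3)
    · have : c1 = c2 := by omega
      subst this
      exact h c1 h1 h3

lemma minreps_step {E : Set ℕ} (hu : IsPermOn n u) (hur : MinReps n E u) {k : ℕ}
    (hk1 : 1 ≤ k) (hk2 : k + 1 ≤ n) (hkE : k ∉ E) : u⁻¹ k < u⁻¹ (k + 1) :=
  symm_lt_of_sAdj hu hk1 hk2 (hur k hk1 (by omega) hkE)

lemma posLT_swap_identity {a b : ℕ} (ha : a ∈ Finset.Icc 1 n) (hb : b ∈ Finset.Icc 1 n)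
    (hab : a < b) (m j : ℕ) :
    posLT n m j (u * Equiv.swap a b)
      + ((if a < j ∧ u a ∈ Finset.Icc 1 m then 1 else 0)
        + (if b < j ∧ u b ∈ Finset.Icc 1 m then 1 else 0))
    = posLT n m j u
      + ((if a < j ∧ u b ∈ Finset.Icc 1 m then 1 else 0)
        + (if b < j ∧ u a ∈ Finset.Icc 1 m then 1 else 0)) := by
  have hbmem : b ∈ (Finset.Icc 1 n).erase a := Finset.mem_erase.mpr ⟨by omega, hb⟩
  have e : ∀ g : ℕ → ℕ, ∑ r ∈ Finset.Icc 1 n, g r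
      = g a + (g b + ∑ r ∈ ((Finset.Icc 1 n).erase a).erase b, g r) := by
    intro g
    rw [Finset.add_sum_erase _ g hbmem, Finset.add_sum_erase _ g ha]
  have ea : (u * Equiv.swap a b) a = u b := by
    rw [Equiv.Perm.mul_apply, Equiv.swap_apply_left]
  have eb : (u * Equiv.swap a b) b = u a := by
    rw [Equiv.Perm.mul_apply, Equiv.swap_apply_right]
  have hTs : ∑ r ∈ ((Finset.Icc 1 n).erase a).erase b,
      (if r < j ∧ (u * Equiv.swap a b) r ∈ Finset.Icc 1 m then (1 : ℕ) else 0)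
      = ∑ r ∈ ((Finset.Icc 1 n).erase a).erase b,
      (if r < j ∧ u r ∈ Finset.Icc 1 m then (1 : ℕ) else 0) := by
    apply Finset.sum_congr rfl
    intro r hr
    have hrb : r ≠ b := (Finset.mem_erase.mp hr).1
    have hra : r ≠ a := (Finset.mem_erase.mp (Finset.mem_erase.mp hr).2).1
    rw [Equiv.Perm.mul_apply, Equiv.swap_apply_of_ne_of_ne hra hrb]
  rw [posLT_sum, posLT_sum, e, e, hTs, ea, eb]
  ring

lemma posLT_swap_le {a b : ℕ} (ha : a ∈ Finset.Icc 1 n) (hb : b ∈ Finset.Icc 1 n)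
    (hab : a < b) (hval : u a < u b) (h1 : 1 ≤ u a) (m j : ℕ) :
    posLT n m j (u * Equiv.swap a b) ≤ posLT n m j u := by
  have h := posLT_swap_identity (u := u) ha hb hab m j
  simp only [Finset.mem_Icc] at h
  split_ifs at h <;> omega

lemma posLT_swap_rect {a b : ℕ} (ha : a ∈ Finset.Icc 1 n) (hb : b ∈ Finset.Icc 1 n)
    (hab : a < b) (hval : u a < u b) (h1 : 1 ≤ u a) {m j : ℕ}
    (hj1 : a < j) (hj2 : j ≤ b) (hm1 : u a ≤ m) (hm2 : m < u b) :
    posLT n m j (u * Equiv.swap a b) + 1 = posLT n m j u := by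
  have h := posLT_swap_identity (u := u) ha hb hab m j
  simp only [Finset.mem_Icc] at h
  split_ifs at h <;> omega

lemma posLT_swap_eq {a b : ℕ} (ha : a ∈ Finset.Icc 1 n) (hb : b ∈ Finset.Icc 1 n)
    (hab : a < b) (hval : u a < u b) (h1 : 1 ≤ u a) {m j : ℕ}
    (hout : ¬(a < j ∧ j ≤ b ∧ u a ≤ m ∧ m < u b)) :
    posLT n m j (u * Equiv.swap a b) = posLT n m j u := by
  have h := posLT_swap_identity (u := u) ha hb hab m j
  simp only [Finset.mem_Icc] at h
  split_ifs at h <;> omega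

lemma bruhat_to_dom (h : BruhatLE n u v) (hu : IsPermOn n u) (m j : ℕ) :
    posLT n m j v ≤ posLT n m j u := by
  have H : ∀ w : Equiv.Perm ℕ, BruhatLE n w v → IsPermOn n w →
      ∀ m j, posLT n m j v ≤ posLT n m j w := by
    intro w hw
    unfold BruhatLE at hw
    induction hw using Relation.ReflTransGen.head_induction_on with
    | refl => intro _ m j; exact le_rfl
    | head hstep _ ih =>
      rename_i w₁ w₂ _
      intro hw₁ m j
      obtain ⟨hinv, x, y, hx1, hxy, hyn, hbe⟩ := hstep
      have hxB : x ∈ Finset.Icc 1 n := Finset.mem_Icc.mpr ⟨hx1, by omega⟩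
      have hyB : y ∈ Finset.Icc 1 n := Finset.mem_Icc.mpr ⟨by omega, hyn⟩
      subst hbe
      have hlt : w₁ x < w₁ y := apply_lt_of_invNum_lt hxB hyB hxy hinv
      have h1x : 1 ≤ w₁ x := (Finset.mem_Icc.mp (apply_mem hw₁ hxB)).1
      have hw₂ : IsPermOn n (w₁ * Equiv.swap x y) := isPermOn_mul_swap hw₁ hxB hyB
      exact le_trans (ih hw₂ m j) (posLT_swap_le hxB hyB hxy hlt h1x m j)
  exact H u h hu m j

lemma dom_to_bruhat (hu : IsPermOn n u) (hv : IsPermOn n v)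
    (hdom : ∀ m j, posLT n m j v ≤ posLT n m j u) : BruhatLE n u v := by
  classical
  suffices H : ∀ (N : ℕ) (w : Equiv.Perm ℕ), IsPermOn n w →
      (∀ m j, posLT n m j v ≤ posLT n m j w) →
      (∑ p ∈ (Finset.Icc 1 n) ×ˢ (Finset.Icc 1 (n + 1)),
        (posLT n p.1 p.2 w - posLT n p.1 p.2 v)) = N → BruhatLE n w v by
    exact H _ u hu hdom rfl
  intro N
  induction N using Nat.strong_induction_on with
  | _ N IH =>
    intro w hw hdomw hN
    by_cases hwv : w = v
    · subst hwv; exact Relation.ReflTransGen.refl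
    -- first differing position
    have hex : ∃ r, w r ≠ v r := by
      by_contra h
      push_neg at h
      exact hwv (Equiv.ext h)
    set a := Nat.find hex with ha_def
    have ha_ne : w a ≠ v a := Nat.find_spec hex
    have ha_min : ∀ r, r < a → w r = v r := by
      intro r hr
      by_contra h
      exact (Nat.find_min hex hr) h
    have haBox : a ∈ Finset.Icc 1 n := by
      by_contra h
      exact ha_ne (by rw [hw a h, hv a h])
    have hpre : ∀ m (j : ℕ), j ≤ a → posLT n m j w = posLT n m j v :=
      fun m j hj => posLT_prefix_eq ha_min m hj
    have h1wa : 1 ≤ w a := (Finset.mem_Icc.mp (apply_mem hw haBox)).1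
    have hvaBox : v a ∈ Finset.Icc 1 n := apply_mem hv haBox
    have h1va : 1 ≤ v a := (Finset.mem_Icc.mp hvaBox).1
    -- w a < v a
    have hav : w a < v a := by
      have hsz := posLT_succ (n := n) w (v a) haBox
      have hsv := posLT_succ (n := n) v (v a) haBox
      have hd := hdomw (v a) (a + 1)
      have hpa := hpre (v a) a le_rfl
      rw [if_pos (Finset.mem_Icc.mpr ⟨h1va, le_rfl⟩)] at hsv
      by_cases hcase : w a ∈ Finset.Icc 1 (v a)
      · have := Finset.mem_Icc.mp hcase
        omega
      · rw [if_neg hcase] at hsz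
        omega
    -- minimal b with a < b, w a < w b ≤ v a
    have hexb : ∃ r, a < r ∧ r ≤ n ∧ w a < w r ∧ w r ≤ v a := by
      refine ⟨w⁻¹ (v a), ?_, (Finset.mem_Icc.mp (symm_apply_mem hw hvaBox)).2, ?_, ?_⟩
      · rcases Nat.lt_trichotomy (w⁻¹ (v a)) a with hlt | heq | hgt
        · exfalso
          have h1 : w (w⁻¹ (v a)) = v (w⁻¹ (v a)) := ha_min _ hlt
          rw [Equiv.Perm.apply_inv_self] at h1
          have h2 : a = w⁻¹ (v a) := v.injective h1
          omega
        · exfalso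
          have : w (w⁻¹ (v a)) = w a := by rw [heq]
          rw [Equiv.Perm.apply_inv_self] at this
          exact ha_ne this.symm
        · exact hgt
      · rw [Equiv.Perm.apply_inv_self]; exact hav
      · rw [Equiv.Perm.apply_inv_self]
    set b := Nat.find hexb with hb_def
    obtain ⟨hab, hbn, hwb1, hwb2⟩ := Nat.find_spec hexb
    have hbmin : ∀ r, r < b → ¬(a < r ∧ r ≤ n ∧ w a < w r ∧ w r ≤ v a) :=
      fun r hr => Nat.find_min hexb hr
    have hbBox : b ∈ Finset.Icc 1 n := Finset.mem_Icc.mpr ⟨by omega, hbn⟩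
    -- rectangle claim
    have hrect : ∀ m j, a < j → j ≤ b → w a ≤ m → m < w b →
        posLT n m j v < posLT n m j w := by
      intro m j hj1 hj2 hm1 hm2
      have hmva : m < v a := lt_of_lt_of_le hm2 hwb2
      have hwj := posLT_split_at (n := n) w m haBox hj1
      have hvj := posLT_split_at (n := n) v m haBox hj1
      have hwj' := posLT_split_at (n := n) w (v a) haBox hj1
      have hvj' := posLT_split_at (n := n) v (v a) haBox hj1
      rw [if_pos (Finset.mem_Icc.mpr ⟨h1wa, hm1⟩)] at hwj
      rw [if_neg (by rw [Finset.mem_Icc]; omega : ¬ v a ∈ Finset.Icc 1 m)] at hvj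
      rw [if_pos (Finset.mem_Icc.mpr ⟨h1wa, le_of_lt hav⟩)] at hwj'
      rw [if_pos (Finset.mem_Icc.mpr ⟨h1va, le_rfl⟩)] at hvj'
      have hNcongr : ((Finset.Icc 1 n).filter
          (fun r => a < r ∧ r < j ∧ w r ∈ Finset.Icc 1 (v a)))
          = ((Finset.Icc 1 n).filter (fun r => a < r ∧ r < j ∧ w r ∈ Finset.Icc 1 m)) := by
        apply Finset.filter_congr
        intro r hr
        simp only [Finset.mem_Icc] at hr ⊢
        constructor
        · rintro ⟨hr1, hr2, hr3, hr4⟩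
          have hnb := hbmin r (by omega)
          have : ¬ (w a < w r) := fun hc => hnb ⟨hr1, hr.2, hc, hr4⟩
          exact ⟨hr1, hr2, hr3, by omega⟩
        · rintro ⟨hr1, hr2, hr3, hr4⟩
          exact ⟨hr1, hr2, hr3, by omega⟩
      have hNva := congrArg Finset.card hNcongr
      have hNvmono : ((Finset.Icc 1 n).filter
          (fun r => a < r ∧ r < j ∧ v r ∈ Finset.Icc 1 m)).card
          ≤ ((Finset.Icc 1 n).filter
          (fun r => a < r ∧ r < j ∧ v r ∈ Finset.Icc 1 (v a))).card := by
        apply Finset.card_le_card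
        intro x hx
        simp only [Finset.mem_filter, Finset.mem_Icc] at hx ⊢
        omega
      have hdva := hdomw (v a) j
      have hpm := hpre m a le_rfl
      have hpva := hpre (v a) a le_rfl
      by_contra hcon
      push_neg at hcon
      omega
    -- build the new permutation
    have hw' : IsPermOn n (w * Equiv.swap a b) := isPermOn_mul_swap hw haBox hbBox
    have hdomw' : ∀ m j, posLT n m j v ≤ posLT n m j (w * Equiv.swap a b) := by
      intro m j
      by_cases hR : a < j ∧ j ≤ b ∧ w a ≤ m ∧ m < w b
      · obtain ⟨hR1, hR2, hR3, hR4⟩ := hR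
        have he := posLT_swap_rect (u := w) haBox hbBox hab hwb1 h1wa hR1 hR2 hR3 hR4
        have := hrect m j hR1 hR2 hR3 hR4
        omega
      · rw [posLT_swap_eq (u := w) haBox hbBox hab hwb1 h1wa hR]
        exact hdomw m j
    have hstep : invNum n w < invNum n (w * Equiv.swap a b) :=
      invNum_lt_swap haBox hbBox hab hwb1
    -- measure decreases
    have hdec : (∑ p ∈ (Finset.Icc 1 n) ×ˢ (Finset.Icc 1 (n + 1)),
        (posLT n p.1 p.2 (w * Equiv.swap a b) - posLT n p.1 p.2 v)) < N := by
      rw [← hN]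
      apply Finset.sum_lt_sum
      · intro p _
        exact Nat.sub_le_sub_right (posLT_swap_le haBox hbBox hab hwb1 h1wa p.1 p.2) _
      · refine ⟨(w a, a + 1), ?_, ?_⟩
        · rw [Finset.mem_product]
          constructor
          · exact apply_mem hw haBox
          · rw [Finset.mem_Icc]
            have := Finset.mem_Icc.mp haBox
            omega
        · have he := posLT_swap_rect (u := w) haBox hbBox hab hwb1 h1wa
            (show a < a + 1 by omega) (show a + 1 ≤ b by omega) le_rfl hwb1
          have hd := hdomw' (w a) (a + 1)
          simp only
          omega
    exact Relation.ReflTransGen.head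
      ⟨hstep, a, b, (Finset.mem_Icc.mp haBox).1, hab, hbn, rfl⟩
      (IH _ hdec (w * Equiv.swap a b) hw' hdomw' rfl)

end BruhatAux

/-- For `J = S \ {s_(i-2), s_(i-1), s_i}` and `u, v` minimal coset representatives:
`u ≤ v` in the Bruhat order iff `b_(h,j)(u,v) ≥ 0` for `h = 1, 2, 3` (corresponding to
`m = i-2, i-1, i`) and all `1 ≤ j ≤ n`. -/


theorem bruhat_iff_b_nonneg (n i : ℕ) (hi1 : 3 ≤ i) (hi2 : i ≤ n - 1)
    (u v : Equiv.Perm ℕ) (hu : IsPermOn n u) (hv : IsPermOn n v)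
    (hu' : MinReps n {i - 2, i - 1, i} u) (hv' : MinReps n {i - 2, i - 1, i} v) :
    BruhatLE n u v ↔
      ∀ m ∈ ({i - 2, i - 1, i} : Set ℕ), ∀ j, 1 ≤ j → j ≤ n →
        (0 : ℤ) ≤ (posLT n m j u : ℤ) - posLT n m j v := by
  have hn4 : 4 ≤ n := by omega
  constructor
  · intro h m _ j _ _
    have h1 := BruhatAux.bruhat_to_dom h hu m j
    have h2 : (posLT n m j v : ℤ) ≤ (posLT n m j u : ℤ) := by exact_mod_cast h1
    omega
  · intro hb
    have hdom3 : ∀ m, m = i - 2 ∨ m = i - 1 ∨ m = i →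
        ∀ j : ℕ, posLT n m j v ≤ posLT n m j u := by
      intro m hm j
      rcases Nat.lt_or_ge n j with hjn | hjn
      · exact le_of_eq (BruhatAux.posLT_large_eq hv hu hjn m)
      · rcases Nat.eq_zero_or_pos j with h0 | h1
        · subst h0; rw [BruhatAux.posLT_j0, BruhatAux.posLT_j0]
        · have hmem : m ∈ ({i - 2, i - 1, i} : Set ℕ) := by
            rcases hm with h | h | h <;> simp [h]
          have h2 := hb m hmem j h1 hjn
          omega
    have hmonoU_low : ∀ c1 c2, 0 + 1 ≤ c1 → c1 < c2 → c2 ≤ i - 2 → u⁻¹ c1 < u⁻¹ c2 := by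
      apply BruhatAux.chain_mono
      intro k hk1 hk2
      exact BruhatAux.minreps_step hu hu' hk1 (by omega)
        (by simp only [Set.mem_insert_iff, Set.mem_singleton_iff]; omega)
    have hmonoV_low : ∀ c1 c2, 0 + 1 ≤ c1 → c1 < c2 → c2 ≤ i - 2 → v⁻¹ c1 < v⁻¹ c2 := by
      apply BruhatAux.chain_mono
      intro k hk1 hk2
      exact BruhatAux.minreps_step hv hv' hk1 (by omega)
        (by simp only [Set.mem_insert_iff, Set.mem_singleton_iff]; omega)
    have hmonoU_high : ∀ c1 c2, i + 1 ≤ c1 → c1 < c2 → c2 ≤ n → u⁻¹ c1 < u⁻¹ c2 := by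
      apply BruhatAux.chain_mono
      intro k hk1 hk2
      exact BruhatAux.minreps_step hu hu' (by omega) hk2
        (by simp only [Set.mem_insert_iff, Set.mem_singleton_iff]; omega)
    have hmonoV_high : ∀ c1 c2, i + 1 ≤ c1 → c1 < c2 → c2 ≤ n → v⁻¹ c1 < v⁻¹ c2 := by
      apply BruhatAux.chain_mono
      intro k hk1 hk2
      exact BruhatAux.minreps_step hv hv' (by omega) hk2
        (by simp only [Set.mem_insert_iff, Set.mem_singleton_iff]; omega)
    have htop : ∀ j, posLT n n j u = posLT n n j v := fun j => by
      rw [BruhatAux.posLT_top hu, BruhatAux.posLT_top hv]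
    have hdomAll : ∀ m j, posLT n m j v ≤ posLT n m j u := by
      intro m j
      rcases le_or_gt m (i - 2) with hm | hm
      · rw [BruhatAux.posLT_eq_min hu (l := 0) (L := i - 2) (by omega) hmonoU_low
            (by omega) hm j,
          BruhatAux.posLT_eq_min hv (l := 0) (L := i - 2) (by omega) hmonoV_low
            (by omega) hm j]
        rw [BruhatAux.posLT_m0, BruhatAux.posLT_m0]
        exact min_le_min le_rfl (hdom3 (i - 2) (Or.inl rfl) j)
      · rcases le_or_gt m i with hmi | hmi
        · exact hdom3 m (by omega) j
        · rcases le_or_gt m n with hmn | hmn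
          · rw [BruhatAux.posLT_eq_min hu (l := i) (L := n) le_rfl hmonoU_high
                (by omega) hmn j,
              BruhatAux.posLT_eq_min hv (l := i) (L := n) le_rfl hmonoV_high
                (by omega) hmn j]
            exact min_le_min (Nat.add_le_add_right (hdom3 i (by omega) j) _)
              (le_of_eq (htop j).symm)
          · rw [BruhatAux.posLT_ge_n hu (by omega) j, BruhatAux.posLT_ge_n hv (by omega) j]
            exact le_of_eq (htop j).symm
    exact BruhatAux.dom_to_bruhat hu hv hdomAll
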